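/- Let V be a finite set with |V| = N, let ζ and q be positive integers with 1 ≤ ζ < N, and let μ ∈ (0,1]. Let Σ be a family of ζ-element subsets of V with |Σ| ≥ 2^{−q}·C(N,ζ), where C(N,ζ) is the binomial coefficient. Then there exist a subset F ⊆ V and a nonempty subfamily 🌼 ⊆ Σ such that: (i) F ⊆ S for every S ∈ 🌼; (ii) for every x ∈ V∖F, the number of S ∈ 🌼 with x ∈ S is at most (ζ/N)^{1−μ}·|🌼|; and (iii) |F| ≤ q/(μ·log₂(N/ζ)). -/

import Mathlib

open Finset

lemma choose_ratio (N ζ : ℕ) : ∀ t : ℕ, t ≤ ζ → ζ ≤ N →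
    N ^ t * (N - t).choose (ζ - t) ≤ ζ ^ t * N.choose ζ := by
  intro t
  induction t with
  | zero => simp
  | succ t ih =>
    intro h1 h2
    have ih' := ih (by omega) h2
    -- key identity: (N-t) * C(N-t-1, ζ-t-1) = C(N-t, ζ-t) * (ζ-t)
    have hid := Nat.add_one_mul_choose_eq (N - t - 1) (ζ - t - 1)
    have e1 : N - t - 1 + 1 = N - t := by omega
    have e2 : ζ - t - 1 + 1 = ζ - t := by omega
    simp only [Nat.succ_eq_add_one, e1, e2] at hid
    -- step: N * C(N-t-1, ζ-t-1) ≤ ζ * C(N-t, ζ-t)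
    have hstep : N * (N - t - 1).choose (ζ - t - 1) ≤ ζ * (N - t).choose (ζ - t) := by
      have hNt : 0 < N - t := by omega
      apply Nat.le_of_mul_le_mul_left _ hNt
      calc (N - t) * (N * (N - t - 1).choose (ζ - t - 1))
          = N * ((N - t) * (N - t - 1).choose (ζ - t - 1)) := by ring
        _ = N * ((N - t).choose (ζ - t) * (ζ - t)) := by rw [hid]
        _ = (N * (ζ - t)) * (N - t).choose (ζ - t) := by ring
        _ ≤ (ζ * (N - t)) * (N - t).choose (ζ - t) := by
            apply Nat.mul_le_mul_right
            zify [show t ≤ ζ from by omega, show t ≤ N from by omega]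
            nlinarith [mul_le_mul_of_nonneg_right (show (ζ:ℤ) ≤ N by exact_mod_cast h2)
              (show (0:ℤ) ≤ t by positivity)]
        _ = (N - t) * (ζ * (N - t).choose (ζ - t)) := by ring
    have e3 : N - (t + 1) = N - t - 1 := by omega
    have e4 : ζ - (t + 1) = ζ - t - 1 := by omega
    rw [e3, e4]
    calc N ^ (t + 1) * (N - t - 1).choose (ζ - t - 1)
        = N ^ t * (N * (N - t - 1).choose (ζ - t - 1)) := by ring
      _ ≤ N ^ t * (ζ * (N - t).choose (ζ - t)) := Nat.mul_le_mul_left _ hstep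
      _ = ζ * (N ^ t * (N - t).choose (ζ - t)) := by ring
      _ ≤ ζ * (ζ ^ t * N.choose ζ) := Nat.mul_le_mul_left _ ih'
      _ = ζ ^ (t + 1) * N.choose ζ := by ring

lemma count_supersets {V : Type*} [Fintype V] [DecidableEq V] (ζ : ℕ) (F : Finset V)
    (W : Finset (Finset V)) (hcard : ∀ S ∈ W, S.card = ζ) (hF : ∀ S ∈ W, F ⊆ S) :
    W.card ≤ (Fintype.card V - F.card).choose (ζ - F.card) := by
  classical
  have h1 : W.card ≤ ((univ \ F).powersetCard (ζ - F.card)).card := by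
    apply Finset.card_le_card_of_injOn (fun S => S \ F)
    · intro S hS
      simp only [Finset.mem_coe, mem_powersetCard]
      refine ⟨sdiff_subset_sdiff (subset_univ S) le_rfl, ?_⟩
      rw [card_sdiff_of_subset (hF S hS), hcard S hS]
    · intro S hS T hT hST
      have hS' : S = (S \ F) ∪ F := (sdiff_union_of_subset (hF S hS)).symm
      have hT' : T = (T \ F) ∪ F := (sdiff_union_of_subset (hF T hT)).symm
      have hST' : S \ F = T \ F := hST
      rw [hS', hT', hST']
  rw [card_powersetCard] at h1
  have : (univ \ F).card = Fintype.card V - F.card := by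
    rw [card_sdiff_of_subset (subset_univ F), card_univ]
  rwa [this] at h1

lemma sunflower_rec {V : Type*} [Fintype V] [DecidableEq V]
    (ζ : ℕ) (r c μ : ℝ) (hr : 0 < r)
    (Sig : Finset (Finset V)) (hcard : ∀ S ∈ Sig, S.card = ζ) :
    ∀ (k : ℕ) (F : Finset V) (W : Finset (Finset V)), W ⊆ Sig → W.Nonempty →
      (∀ S ∈ W, F ⊆ S) → ζ ≤ F.card + k →
      r ^ ((1 - μ) * F.card) * c ≤ W.card →
      ∃ (F' : Finset V) (W' : Finset (Finset V)), W' ⊆ Sig ∧ W'.Nonempty ∧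
        (∀ S ∈ W', F' ⊆ S) ∧
        (∀ x ∉ F', ((W'.filter (fun S => x ∈ S)).card : ℝ)
            ≤ r ^ ((1 : ℝ) - μ) * W'.card) ∧
        r ^ ((1 - μ) * F'.card) * c ≤ W'.card := by
  intro k
  induction k with
  | zero =>
    intro F W hsub hne hF hk hbd
    refine ⟨F, W, hsub, hne, hF, ?_, hbd⟩
    intro x hx
    have hempty : W.filter (fun S => x ∈ S) = ∅ := by
      rw [filter_eq_empty_iff]
      intro S hS hxS
      have h1 : S.card ≤ F.card := by rw [hcard S (hsub hS)]; omega
      have h2 : F = S := eq_of_subset_of_card_le (hF S hS) h1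
      exact hx (h2 ▸ hxS)
    rw [hempty]
    simp only [card_empty, Nat.cast_zero]
    positivity
  | succ k ih =>
    intro F W hsub hne hF hk hbd
    by_cases hgood : ∀ x ∉ F, ((W.filter (fun S => x ∈ S)).card : ℝ)
        ≤ r ^ ((1 : ℝ) - μ) * W.card
    · exact ⟨F, W, hsub, hne, hF, hgood, hbd⟩
    · push_neg at hgood
      obtain ⟨x, hx, hlt⟩ := hgood
      set W' := W.filter (fun S => x ∈ S) with hW'
      have hW'sub : W' ⊆ Sig := (filter_subset _ _).trans hsub
      have hW'ne : W'.Nonempty := by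
        have hpos : (0:ℝ) < (W'.card : ℝ) :=
          lt_of_le_of_lt (by positivity) hlt
        rw [← card_pos]
        exact_mod_cast hpos
      have hxF : ∀ S ∈ W', insert x F ⊆ S := by
        intro S hS
        rw [mem_filter] at hS
        exact insert_subset hS.2 (hF S hS.1)
      have hcardF : (insert x F).card = F.card + 1 := card_insert_of_notMem hx
      refine ih (insert x F) W' hW'sub hW'ne hxF (by omega) ?_
      have hbd2 : r ^ ((1 - μ) * F.card) * c * r ^ ((1:ℝ) - μ)
          ≤ (W.card : ℝ) * r ^ ((1:ℝ) - μ) :=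
        mul_le_mul_of_nonneg_right hbd (Real.rpow_nonneg hr.le _)
      have hexp : (1 - μ) * ((insert x F).card : ℝ)
          = (1 - μ) * F.card + ((1:ℝ) - μ) := by
        rw [hcardF]; push_cast; ring
      rw [hexp, Real.rpow_add hr]
      calc r ^ ((1 - μ) * (F.card:ℝ)) * r ^ ((1:ℝ) - μ) * c
          = r ^ ((1 - μ) * (F.card:ℝ)) * c * r ^ ((1:ℝ) - μ) := by ring
        _ ≤ (W.card : ℝ) * r ^ ((1:ℝ) - μ) := hbd2
        _ = r ^ ((1:ℝ) - μ) * (W.card : ℝ) := by ring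
        _ ≤ (W'.card : ℝ) := hlt.le

/-- Sunflower extraction: any large enough family `Sig` of `ζ`-subsets of an
`N`-element set (of size at least `2^{-q}·C(N,ζ)`) contains a nonempty
subfamily `W` forming a `(μ, ζ, q/(μ·log₂(N/ζ)))`-sunflower: all members of `W`
contain a common core `F`, every point outside `F` lies in at most a
`(ζ/N)^{1-μ}` fraction of the members of `W`, and
`|F| ≤ q/(μ·log₂(N/ζ))`. -/
theorem stmt_6 {V : Type*} [Fintype V] [DecidableEq V]
    (N : ℕ) (hN : N = Fintype.card V)
    (ζ q : ℕ) (hζ1 : 1 ≤ ζ) (hζN : ζ < N) (hq : 1 ≤ q)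
    (μ : ℝ) (hμ0 : 0 < μ) (hμ1 : μ ≤ 1)
    (Sig : Finset (Finset V)) (hcard : ∀ S ∈ Sig, S.card = ζ)
    (hsize : ((N.choose ζ : ℝ) / 2 ^ q) ≤ Sig.card) :
    ∃ (F : Finset V) (W : Finset (Finset V)), W ⊆ Sig ∧ W.Nonempty ∧
      (∀ S ∈ W, F ⊆ S) ∧
      (∀ x : V, x ∉ F →
        ((W.filter (fun S => x ∈ S)).card : ℝ)
          ≤ ((ζ : ℝ) / (N : ℝ)) ^ ((1 : ℝ) - μ) * W.card) ∧
      (F.card : ℝ) ≤ (q : ℝ) / (μ * Real.logb 2 ((N : ℝ) / (ζ : ℝ))) := by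
  classical
  have hN0 : (0:ℝ) < N := by
    have : 0 < N := by omega
    exact_mod_cast this
  have hζ0 : (0:ℝ) < ζ := by exact_mod_cast hζ1
  set r : ℝ := (ζ : ℝ) / N with hrdef
  have hr : 0 < r := div_pos hζ0 hN0
  have hC : (0:ℝ) < (N.choose ζ : ℝ) := by
    exact_mod_cast Nat.choose_pos hζN.le
  set c : ℝ := (N.choose ζ : ℝ) / 2 ^ q with hcdef
  have hc : 0 < c := by positivity
  have hSigne : Sig.Nonempty := by
    have hpos : (0:ℝ) < (Sig.card : ℝ) := lt_of_lt_of_le hc hsize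
    rw [← card_pos]
    exact_mod_cast hpos
  have hinit : r ^ ((1 - μ) * ((∅ : Finset V).card : ℝ)) * c ≤ (Sig.card : ℝ) := by
    simp only [card_empty, Nat.cast_zero, mul_zero, Real.rpow_zero, one_mul]
    exact hsize
  obtain ⟨F, W, hWsub, hWne, hFW, hii, hbd⟩ :=
    sunflower_rec ζ r c μ hr Sig hcard ζ ∅ Sig (Finset.Subset.refl _) hSigne
      (fun S _ => empty_subset S) (by simp) hinit
  refine ⟨F, W, hWsub, hWne, hFW, hii, ?_⟩
  -- bound |F|
  set t := F.card with htdef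
  have htζ : t ≤ ζ := by
    obtain ⟨S, hS⟩ := hWne
    have := card_le_card (hFW S hS)
    rwa [hcard S (hWsub hS)] at this
  have hcount : W.card ≤ (N - t).choose (ζ - t) := by
    have := count_supersets ζ F W (fun S hS => hcard S (hWsub hS)) hFW
    rwa [← hN] at this
  have hratio := choose_ratio N ζ t htζ hζN.le
  have hratioR : ((N - t).choose (ζ - t) : ℝ) ≤ r ^ t * (N.choose ζ : ℝ) := by
    have hNt : (0:ℝ) < (N:ℝ) ^ t := by positivity
    rw [hrdef, div_pow, div_mul_eq_mul_div, le_div_iff₀ hNt]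
    calc ((N - t).choose (ζ - t) : ℝ) * (N:ℝ) ^ t
        = ((N:ℕ) ^ t * (N - t).choose (ζ - t) : ℕ) := by push_cast; ring
      _ ≤ ((ζ:ℕ) ^ t * N.choose ζ : ℕ) := by exact_mod_cast hratio
      _ = (ζ:ℝ) ^ t * (N.choose ζ : ℝ) := by push_cast; ring
  have hchain : r ^ ((1 - μ) * (t:ℝ)) * c ≤ r ^ t * (N.choose ζ : ℝ) := by
    calc r ^ ((1 - μ) * (t:ℝ)) * c ≤ (W.card : ℝ) := hbd
      _ ≤ ((N - t).choose (ζ - t) : ℝ) := by exact_mod_cast hcount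
      _ ≤ r ^ t * (N.choose ζ : ℝ) := hratioR
  -- rewrite r ^ t as rpow and split
  have hsplit : (r : ℝ) ^ t = r ^ ((1 - μ) * (t:ℝ)) * r ^ (μ * (t:ℝ)) := by
    rw [← Real.rpow_natCast r t, ← Real.rpow_add hr]
    ring_nf
  rw [hsplit] at hchain
  have hrp : (0:ℝ) < r ^ ((1 - μ) * (t:ℝ)) := Real.rpow_pos_of_pos hr _
  have h5 : c ≤ r ^ (μ * (t:ℝ)) * (N.choose ζ : ℝ) := by
    have := (mul_le_mul_iff_right₀ hrp).mp (by linarith [hchain] :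
      r ^ ((1 - μ) * (t:ℝ)) * c ≤ r ^ ((1 - μ) * (t:ℝ)) * (r ^ (μ * (t:ℝ)) * (N.choose ζ : ℝ)))
    exact this
  have h6 : (1:ℝ) / 2 ^ q ≤ r ^ (μ * (t:ℝ)) := by
    have h5' : (1 / 2 ^ q : ℝ) * (N.choose ζ : ℝ) ≤ r ^ (μ * (t:ℝ)) * (N.choose ζ : ℝ) := by
      rw [show (1 / 2 ^ q : ℝ) * (N.choose ζ : ℝ) = (N.choose ζ : ℝ) / 2 ^ q from by ring]
      exact h5
    exact (mul_le_mul_iff_left₀ hC).mp h5'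
  -- take logs
  have hL : 0 < Real.logb 2 ((N:ℝ) / ζ) := by
    apply Real.logb_pos one_lt_two
    rw [lt_div_iff₀ hζ0]
    simpa using (by exact_mod_cast hζN : (ζ:ℝ) < N)
  have hlogr : Real.logb 2 r = -Real.logb 2 ((N:ℝ) / ζ) := by
    rw [hrdef, show (ζ:ℝ)/N = ((N:ℝ)/ζ)⁻¹ by rw [inv_div], Real.logb_inv]
  have h7 : Real.logb 2 ((1:ℝ) / 2 ^ q) ≤ Real.logb 2 (r ^ (μ * (t:ℝ))) := by
    exact Real.logb_le_logb_of_le (by norm_num) (by positivity) h6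
  have h8 : Real.logb 2 ((1:ℝ) / 2 ^ q) = -(q:ℝ) := by
    rw [show (1:ℝ) / 2 ^ q = (2:ℝ) ^ (-(q:ℝ)) by
      rw [Real.rpow_neg (by norm_num), Real.rpow_natCast, one_div]]
    exact Real.logb_rpow (by norm_num) (by norm_num)
  have h9 : Real.logb 2 (r ^ (μ * (t:ℝ))) = μ * (t:ℝ) * Real.logb 2 r := by
    rw [Real.logb, Real.log_rpow hr, Real.logb]; ring
  rw [h8, h9, hlogr] at h7
  have hfinal : μ * (t:ℝ) * Real.logb 2 ((N:ℝ) / ζ) ≤ (q:ℝ) := by linarith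
  rw [le_div_iff₀ (mul_pos hμ0 hL)]
  calc (t:ℝ) * (μ * Real.logb 2 ((N:ℝ)/ζ)) = μ * (t:ℝ) * Real.logb 2 ((N:ℝ)/ζ) := by ring
    _ ≤ (q:ℝ) := hfinal
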